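/- (Cost comparison of independent tumbling factor windows.) Let K ≥ 1 and let r_W, r_f, r'_f, r₁, ..., r_K, s₁, ..., s_K, R be positive integers such that r_W divides r_f and r'_f; r_f and r'_f divide each r_j; s_j divides r_j; and each r_j divides R. Define m_j = R/r_j, k_j = r_j/s_j, n_j = (m_j − 1)·k_j + 1, λ = Σ_{j=1}^{K} n_j/m_j, n_f = R/r_f, n'_f = R/r'_f, and the costs c_f = Σ_{j=1}^{K} n_j·(r_j/r_f) + n_f·(r_f/r_W) and c'_f = Σ_{j=1}^{K} n_j·(r_j/r'_f) + n'_f·(r'_f/r_W). If λ > r'_f/r_W, then c_f ≤ c'_f if and only if r_f·(λ − r'_f/r_W) ≥ r'_f·(λ − r_f/r_W), i.e., r_f/r'_f ≥ (λ − r_f/r_W)/(λ − r'_f/r_W). -/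

import Mathlib

/-- Cost comparison of independent tumbling factor windows: with
`c_f = Σ_j n_j·(r_j/r_f) + n_f·(r_f/r_W)` and `c'_f = Σ_j n_j·(r_j/r'_f) + n'_f·(r'_f/r_W)`,
if `λ > r'_f/r_W` then `c_f ≤ c'_f` iff `r_f·(λ − r'_f/r_W) ≥ r'_f·(λ − r_f/r_W)`,
i.e. iff `r_f/r'_f ≥ (λ − r_f/r_W)/(λ − r'_f/r_W)`. -/
theorem independent_factor_window_cost_compare
    (K : ℕ) (hK : 1 ≤ K)
    (rW rf rf' R : ℕ) (r s : Fin K → ℕ)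
    (hrW : 0 < rW) (hrf : 0 < rf) (hrf' : 0 < rf') (hR : 0 < R)
    (hr : ∀ j, 0 < r j) (hs : ∀ j, 0 < s j)
    (dW : rW ∣ rf) (dW' : rW ∣ rf')
    (df : ∀ j, rf ∣ r j) (df' : ∀ j, rf' ∣ r j)
    (dsr : ∀ j, s j ∣ r j) (drR : ∀ j, r j ∣ R)
    (m k n : Fin K → ℕ)
    (hm : ∀ j, m j = R / r j) (hk : ∀ j, k j = r j / s j)
    (hn : ∀ j, n j = (m j - 1) * k j + 1)
    (lam : ℚ) (hlam : lam = ∑ j, (n j : ℚ) / (m j : ℚ))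
    (nf nf' : ℕ) (hnf : nf = R / rf) (hnf' : nf' = R / rf')
    (cf cf' : ℚ)
    (hcf : cf = (∑ j, (n j : ℚ) * ((r j : ℚ) / (rf : ℚ)))
        + (nf : ℚ) * ((rf : ℚ) / (rW : ℚ)))
    (hcf' : cf' = (∑ j, (n j : ℚ) * ((r j : ℚ) / (rf' : ℚ)))
        + (nf' : ℚ) * ((rf' : ℚ) / (rW : ℚ)))
    (hpos : (rf' : ℚ) / (rW : ℚ) < lam) :
    (cf ≤ cf' ↔
      (rf' : ℚ) * (lam - (rf : ℚ) / (rW : ℚ))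
        ≤ (rf : ℚ) * (lam - (rf' : ℚ) / (rW : ℚ))) ∧
    (cf ≤ cf' ↔
      (lam - (rf : ℚ) / (rW : ℚ)) / (lam - (rf' : ℚ) / (rW : ℚ))
        ≤ (rf : ℚ) / (rf' : ℚ)) := by

  have hrfQ : (0:ℚ) < rf := by exact_mod_cast hrf
  have hrf'Q : (0:ℚ) < rf' := by exact_mod_cast hrf'
  have hrWQ : (0:ℚ) < rW := by exact_mod_cast hrW
  have hRQ : (0:ℚ) < R := by exact_mod_cast hR
  have hlampos : (0:ℚ) < lam := lt_trans (by positivity) hpos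
  have j0 : Fin K := ⟨0, hK⟩
  have dfR : rf ∣ R := (df j0).trans (drR j0)
  have df'R : rf' ∣ R := (df' j0).trans (drR j0)
  have key : ∀ (x : ℕ), 0 < x →
      (∑ j, (n j : ℚ) * ((r j : ℚ) / (x : ℚ))) = ((R:ℚ)/x) * lam := by
    intro x hx
    have hxQ : (0:ℚ) < x := by exact_mod_cast hx
    rw [hlam, Finset.mul_sum]
    apply Finset.sum_congr rfl
    intro j _
    have hmj : (m j : ℚ) * (r j : ℚ) = (R:ℚ) := by
      rw [hm j]; exact_mod_cast Nat.div_mul_cancel (drR j)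
    have hmpos : (0:ℚ) < m j := by
      have : 0 < m j := by
        rw [hm j]; exact Nat.div_pos (Nat.le_of_dvd hR (drR j)) (hr j)
      exact_mod_cast this
    field_simp
    linear_combination (n j : ℚ) * hmj
  have hnfQ : (nf : ℚ) * (rf : ℚ) = (R:ℚ) := by
    rw [hnf]; exact_mod_cast Nat.div_mul_cancel dfR
  have hnf'Q : (nf' : ℚ) * (rf' : ℚ) = (R:ℚ) := by
    rw [hnf']; exact_mod_cast Nat.div_mul_cancel df'R
  have hcf2 : cf = (R:ℚ)/rf * lam + (R:ℚ)/rW := by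
    rw [hcf, key rf hrf]
    congr 1
    field_simp
    linear_combination hnfQ
  have hcf'2 : cf' = (R:ℚ)/rf' * lam + (R:ℚ)/rW := by
    rw [hcf', key rf' hrf']
    congr 1
    field_simp
    linear_combination hnf'Q
  have h1 : cf ≤ cf' ↔ (rf':ℚ) ≤ rf := by
    rw [hcf2, hcf'2, add_le_add_iff_right]
    rw [mul_le_mul_iff_of_pos_right hlampos, div_le_div_iff₀ hrfQ hrf'Q]
    constructor
    · intro h; exact le_of_mul_le_mul_left (by linarith [mul_comm (R:ℚ) rf', mul_comm (R:ℚ) rf]) hRQ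
    · intro h; nlinarith
  have e1 : (rf':ℚ) * (lam - (rf:ℚ)/rW) = rf'*lam - rf*rf'/rW := by ring
  have e2 : (rf:ℚ) * (lam - (rf':ℚ)/rW) = rf*lam - rf*rf'/rW := by ring
  have h2 : ((rf' : ℚ) * (lam - (rf : ℚ) / (rW : ℚ))
        ≤ (rf : ℚ) * (lam - (rf' : ℚ) / (rW : ℚ))) ↔ (rf':ℚ) ≤ rf := by
    rw [e1, e2]
    constructor
    · intro h
      have : (rf':ℚ) * lam ≤ rf * lam := by linarith
      exact le_of_mul_le_mul_right this hlampos
    · intro h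
      have : (rf':ℚ) * lam ≤ rf * lam := mul_le_mul_of_nonneg_right h hlampos.le
      linarith
  have hden : (0:ℚ) < lam - (rf':ℚ)/rW := by linarith
  constructor
  · rw [h1, h2]
  · rw [h1, div_le_div_iff₀ hden hrf'Q,
      show (lam - (rf:ℚ)/rW) * rf' = rf' * (lam - (rf:ℚ)/rW) from mul_comm _ _]
    exact h2.symm
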